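/- The reward function r(S) = Σ_{i∈S} (n_i - |∪_{j∈N_i∩S} N_j|)·p_i, where p_i = P(Z_i > τ), is monotone: for any S ⊆ V and u ∉ S, r(S ∪ {u}) ≥ r(S). -/
import Mathlib


open MeasureTheory ProbabilityTheory

/-- A finite rooted tree given by a parent function. -/
structure ParentTree (V : Type*) where
  root : V
  parent : V → V
  parent_root : parent root = root
  reaches_root : ∀ v, ∃ n, parent^[n] v = root
  acyclic : ∀ v n, 0 < n → parent^[n] v = v → v = root

namespace ParentTree

variable {V : Type*}

/-- `anc i j` : `i` is a strict ancestor of `j`. -/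
def anc (T : ParentTree V) (i j : V) : Prop :=
  i ≠ j ∧ ∃ n, T.parent^[n] j = i

/-- The set of strict descendants of `i`. -/
def desc (T : ParentTree V) (i : V) : Set V := {v | T.anc i v}

/-- The number of strict descendants of `i`. -/
noncomputable def nd (T : ParentTree V) (i : V) : ℕ := (T.desc i).ncard

/-- The expected total reward of vaccinating the set `S`, where `p i = P(Z_i > τ)`. -/
noncomputable def reward (T : ParentTree V) (p : V → ℝ) (S : Finset V) : ℝ :=
  ∑ i ∈ S, ((T.nd i : ℝ) - ((⋃ j ∈ T.desc i ∩ (S : Set V), T.desc j).ncard : ℝ)) * p i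

end ParentTree

open ParentTree

section Aux

variable {V : Type*} [DecidableEq V] (T : ParentTree V)

lemma iterate_root (n : ℕ) : T.parent^[n] T.root = T.root :=
  Function.iterate_fixed T.parent_root n

lemma anc_trans {i j k : V} (hij : T.anc i j) (hjk : T.anc j k) : T.anc i k := by
  obtain ⟨hne1, n, hn⟩ := hij
  obtain ⟨hne2, m, hm⟩ := hjk
  refine ⟨?_, n + m, ?_⟩
  · rintro rfl
    have hcyc : T.parent^[n + m] i = i := by
      rw [Function.iterate_add_apply, hm, hn]
    have hn0 : 0 < n := Nat.pos_of_ne_zero (by rintro rfl; exact hne1 hn.symm)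
    have hk := T.acyclic i (n + m) (by omega) hcyc
    have hj : j = T.root := by rw [← hm, hk, iterate_root]
    exact hne2 (hj.trans hk.symm)
  · rw [Function.iterate_add_apply, hm, hn]

lemma not_mem_desc_self (u : V) : u ∉ T.desc u := fun h => h.1 rfl

lemma desc_subset_of_anc {i j : V} (hij : T.anc i j) : T.desc j ⊆ T.desc i :=
  fun _ hv => anc_trans T hij hv

lemma anc_chain {i j u : V} (hi : T.anc i u) (hj : T.anc j u) :
    i = j ∨ T.anc i j ∨ T.anc j i := by
  obtain ⟨_, n, hn⟩ := hi
  obtain ⟨_, m, hm⟩ := hj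
  rcases le_total n m with h | h
  · have hij : T.parent^[m - n] i = j := by
      rw [← hn, ← Function.iterate_add_apply, Nat.sub_add_cancel h, hm]
    by_cases hje : j = i
    · exact Or.inl hje.symm
    · exact Or.inr (Or.inr ⟨hje, _, hij⟩)
  · have hji : T.parent^[n - m] j = i := by
      rw [← hm, ← Function.iterate_add_apply, Nat.sub_add_cancel h, hn]
    by_cases hie : i = j
    · exact Or.inl hie
    · exact Or.inr (Or.inl ⟨hie, _, hji⟩)

/-- The blocked set `⋃_{j ∈ N_i ∩ S} N_j`. -/
def Dset (i : V) (A : Finset V) : Set V :=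
  ⋃ j ∈ T.desc i ∩ (A : Set V), T.desc j

lemma Dset_subset_desc (i : V) (A : Finset V) : Dset T i A ⊆ T.desc i := by
  intro x hx
  simp only [Dset, Set.mem_iUnion] at hx
  obtain ⟨j, ⟨hj, _⟩, hx⟩ := hx
  exact desc_subset_of_anc T hj hx

lemma Dset_mono (i : V) {A B : Finset V} (h : A ⊆ B) : Dset T i A ⊆ Dset T i B := by
  intro x hx
  simp only [Dset, Set.mem_iUnion] at hx ⊢
  obtain ⟨j, ⟨hj1, hj2⟩, hx⟩ := hx
  exact ⟨j, ⟨hj1, h hj2⟩, hx⟩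

lemma Dset_anc_subset {i u : V} (h : T.anc i u) (A : Finset V) :
    Dset T u A ⊆ Dset T i A := by
  intro x hx
  simp only [Dset, Set.mem_iUnion] at hx ⊢
  obtain ⟨j, ⟨hj1, hj2⟩, hx⟩ := hx
  exact ⟨j, ⟨anc_trans T h hj1, hj2⟩, hx⟩

lemma Dset_insert_of_not_mem {i u : V} (h : u ∉ T.desc i) (A : Finset V) :
    Dset T i (insert u A) = Dset T i A := by
  have hs : T.desc i ∩ ((insert u A : Finset V) : Set V) = T.desc i ∩ (A : Set V) := by
    ext j
    simp only [Set.mem_inter_iff, Finset.coe_insert, Set.mem_insert_iff]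
    constructor
    · rintro ⟨hj, rfl | hjA⟩
      · exact absurd hj h
      · exact ⟨hj, hjA⟩
    · rintro ⟨hj, hjA⟩
      exact ⟨hj, Or.inr hjA⟩
  unfold Dset
  rw [hs]

lemma Dset_insert_of_mem {i u : V} (h : u ∈ T.desc i) (A : Finset V) :
    Dset T i (insert u A) = Dset T i A ∪ T.desc u := by
  unfold Dset
  ext x
  simp only [Set.mem_iUnion, Set.mem_union, Set.mem_inter_iff, Finset.coe_insert,
    Set.mem_insert_iff]
  constructor
  · rintro ⟨j, ⟨hj, rfl | hjA⟩, hx⟩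
    · exact Or.inr hx
    · exact Or.inl ⟨j, ⟨hj, hjA⟩, hx⟩
  · rintro (⟨j, ⟨hj1, hj2⟩, hx⟩ | hx)
    · exact ⟨j, ⟨hj1, Or.inr hj2⟩, hx⟩
    · exact ⟨u, ⟨h, Or.inl rfl⟩, hx⟩

end Aux

/-- The reward function `r(S) = Σ_{i∈S} (n_i - |∪_{j∈N_i∩S} N_j|)·p_i` is monotone:
adding any node `u ∉ S` does not decrease the reward. -/
theorem reward_monotone {V : Type*} [Fintype V] [DecidableEq V] (T : ParentTree V) (p : V → ℝ)
    (hp0 : ∀ v, 0 ≤ p v) (hp1 : ∀ v, p v ≤ 1)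
    (hpanc : ∀ i j, T.anc i j → p i < p j)
    (S : Finset V) (u : V) (hu : u ∉ S) :
    T.reward p S ≤ T.reward p (insert u S) := by
  classical
  have hrw : ∀ A : Finset V,
      T.reward p A = ∑ i ∈ A, ((T.nd i : ℝ) - ((Dset T i A).ncard : ℝ)) * p i := fun _ => rfl
  rw [hrw, hrw, Finset.sum_insert hu]
  -- the new term for `u` is nonnegative
  have hDu_eq : Dset T u (insert u S) = Dset T u S :=
    Dset_insert_of_not_mem T (not_mem_desc_self T u) S
  have hDuS_sub : Dset T u S ⊆ T.desc u := Dset_subset_desc T u S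
  have hua : ((Dset T u S).ncard : ℝ) ≤ (T.nd u : ℝ) := by
    exact_mod_cast Set.ncard_le_ncard hDuS_sub (Set.toFinite _)
  have hterm_u : 0 ≤ ((T.nd u : ℝ) - ((Dset T u (insert u S)).ncard : ℝ)) * p u := by
    rw [hDu_eq]
    exact mul_nonneg (by linarith) (hp0 u)
  by_cases hex : ∃ i ∈ S, T.anc i u
  · -- there is an ancestor of u in S; pick the one with maximal p (the deepest one)
    obtain ⟨w, hwA, hwmax⟩ :=
      Finset.exists_max_image (S.filter (fun i => T.anc i u)) p
        (by obtain ⟨i, hi, hanc⟩ := hex; exact ⟨i, Finset.mem_filter.2 ⟨hi, hanc⟩⟩)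
    rw [Finset.mem_filter] at hwA
    obtain ⟨hwS, hwanc⟩ := hwA
    have hdeep : ∀ i ∈ S, T.anc i u → i ≠ w → T.anc i w := by
      intro i hi hanc hne
      rcases anc_chain T hanc hwanc with h | h | h
      · exact absurd h hne
      · exact h
      · exfalso
        have h1 := hpanc w i h
        have h2 := hwmax i (Finset.mem_filter.2 ⟨hi, hanc⟩)
        linarith
    -- terms for i ∈ S, i ≠ w are unchanged
    have hsame : ∀ i ∈ S, i ≠ w → Dset T i (insert u S) = Dset T i S := by
      intro i hi hne
      by_cases hanc : T.anc i u
      · have hiw : T.anc i w := hdeep i hi hanc hne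
        refine subset_antisymm ?_ (Dset_mono T i (Finset.subset_insert u S))
        rw [Dset_insert_of_mem T hanc S]
        refine Set.union_subset subset_rfl ?_
        intro x hx
        simp only [Dset, Set.mem_iUnion]
        exact ⟨w, ⟨hiw, hwS⟩, desc_subset_of_anc T hwanc hx⟩
      · exact Dset_insert_of_not_mem T hanc S
    -- split both sums at w
    rw [← Finset.sum_erase_add _ _ hwS, ← Finset.sum_erase_add S
      (fun i => ((T.nd i : ℝ) - ((Dset T i (insert u S)).ncard : ℝ)) * p i) hwS]
    have herase : ∑ i ∈ S.erase w, ((T.nd i : ℝ) - ((Dset T i S).ncard : ℝ)) * p i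
        = ∑ i ∈ S.erase w, ((T.nd i : ℝ) - ((Dset T i (insert u S)).ncard : ℝ)) * p i := by
      refine Finset.sum_congr rfl fun i hi => ?_
      rw [hsame i (Finset.mem_of_mem_erase hi) (Finset.ne_of_mem_erase hi)]
    rw [herase]
    -- reduce to the key inequality at w
    have hDw_eq : Dset T w (insert u S) = Dset T w S ∪ T.desc u :=
      Dset_insert_of_mem T hwanc S
    -- key cardinality facts
    set a := (Dset T u S).ncard with ha
    set b := T.nd u with hb
    set c := (Dset T w S).ncard with hc
    set d := (Dset T w S ∪ T.desc u).ncard with hd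
    have hcd : c ≤ d := Set.ncard_le_ncard Set.subset_union_left (Set.toFinite _)
    have hkey : d + a ≤ c + b := by
      have h1 : Dset T w S ∪ T.desc u = Dset T w S ∪ (T.desc u \ Dset T w S) := by
        rw [Set.union_diff_self]
      have h2 : d ≤ c + (T.desc u \ Dset T w S).ncard := by
        rw [hd, h1]; exact Set.ncard_union_le _ _
      have h3 : (T.desc u \ Dset T w S).ncard ≤ (T.desc u \ Dset T u S).ncard :=
        Set.ncard_le_ncard (Set.diff_subset_diff_right (Dset_anc_subset T hwanc S))
          (Set.toFinite _)
      have h4 : (T.desc u \ Dset T u S).ncard + a = b :=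
        Set.ncard_diff_add_ncard_of_subset hDuS_sub (Set.toFinite _)
      omega
    have hpw : p w < p u := hpanc w u hwanc
    have hmul : ((d : ℝ) - c) * p w ≤ ((b : ℝ) - a) * p u := by
      have h5 : ((d : ℝ) - c) ≤ ((b : ℝ) - a) := by
        have : (d : ℝ) + a ≤ (c : ℝ) + b := by exact_mod_cast hkey
        linarith
      have h6 : (0 : ℝ) ≤ (d : ℝ) - c := by
        have : (c : ℝ) ≤ d := by exact_mod_cast hcd
        linarith
      exact mul_le_mul h5 (le_of_lt hpw) (hp0 w) (by linarith [hp0 u, hua])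
    rw [hDw_eq, hDu_eq]
    have hexpand : ((T.nd w : ℝ) - (c : ℝ)) * p w
        ≤ ((b : ℝ) - (a : ℝ)) * p u + ((T.nd w : ℝ) - (d : ℝ)) * p w := by nlinarith [hmul]
    calc ∑ i ∈ S.erase w, ((T.nd i : ℝ) - ((Dset T i (insert u S)).ncard : ℝ)) * p i
          + ((T.nd w : ℝ) - (c : ℝ)) * p w
        ≤ ∑ i ∈ S.erase w, ((T.nd i : ℝ) - ((Dset T i (insert u S)).ncard : ℝ)) * p i
          + (((b : ℝ) - (a : ℝ)) * p u + ((T.nd w : ℝ) - (d : ℝ)) * p w) := by linarith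
      _ = ((b : ℝ) - (a : ℝ)) * p u
          + (∑ i ∈ S.erase w, ((T.nd i : ℝ) - ((Dset T i (insert u S)).ncard : ℝ)) * p i
            + ((T.nd w : ℝ) - (d : ℝ)) * p w) := by ring
  · -- no ancestor of u in S: all old terms unchanged
    push_neg at hex
    have hsame : ∀ i ∈ S, Dset T i (insert u S) = Dset T i S := by
      intro i hi
      exact Dset_insert_of_not_mem T (fun h => hex i hi h) S
    have hsum : ∑ i ∈ S, ((T.nd i : ℝ) - ((Dset T i S).ncard : ℝ)) * p i
        = ∑ i ∈ S, ((T.nd i : ℝ) - ((Dset T i (insert u S)).ncard : ℝ)) * p i := by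
      refine Finset.sum_congr rfl fun i hi => ?_
      rw [hsame i hi]
    rw [hsum]
    linarith
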